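/- Let g be a finite-dimensional semisimple Lie algebra over ℂ. Then every commuting linear map on g lies in the centroid of g: if f : g → g is linear and ⁅f(x), y⁆ = ⁅x, f(y)⁆ for all x, y ∈ g, then f(⁅x,y⁆) = ⁅f(x), y⁆ for all x, y ∈ g. -/

import Mathlib

section Abstract

variable {L : Type*} [LieRing L] [LieAlgebra ℂ L]

/-- From "no abelian ideals", central elements vanish. -/
lemma central_eq_zero_of_no_abelian_ideals
    (habel : ∀ I : LieIdeal ℂ L, IsLieAbelian I → I = ⊥)
    (z : L) (hz : ∀ v : L, ⁅z, v⁆ = 0) : z = 0 := by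
  have hz' : ∀ v : L, ⁅v, z⁆ = 0 := fun v => by
    rw [← neg_eq_zero, lie_skew z v]; exact hz v
  let Iz : LieIdeal ℂ L :=
    { toSubmodule := Submodule.span ℂ {z}
      lie_mem := by
        intro x y hy
        replace hy : y ∈ Submodule.span ℂ {z} := hy
        show ⁅x, y⁆ ∈ Submodule.span ℂ {z}
        rw [Submodule.mem_span_singleton] at hy
        obtain ⟨a, rfl⟩ := hy
        rw [lie_smul, hz' x, smul_zero]
        exact Submodule.zero_mem _ }
  have habz : IsLieAbelian Iz := by
    constructor
    intro a b
    have hb : (b : L) ∈ Submodule.span ℂ {z} := b.2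
    rw [Submodule.mem_span_singleton] at hb
    obtain ⟨c, hc⟩ := hb
    apply Subtype.ext
    have : (↑(⁅a, b⁆ : Iz) : L) = ⁅(a : L), (b : L)⁆ := rfl
    rw [this, ← hc, lie_smul, hz' _, smul_zero]
    rfl
  have hbot := habel Iz habz
  have hzmem : z ∈ Iz := Submodule.mem_span_singleton_self z
  rw [hbot] at hzmem
  exact (LieSubmodule.mem_bot _).mp hzmem

/-- A commuting square-zero linear map on a Lie algebra with no abelian
ideals is zero. -/
lemma comm_sq_zero
    (habel : ∀ I : LieIdeal ℂ L, IsLieAbelian I → I = ⊥)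
    (m : L →ₗ[ℂ] L) (hm : ∀ x y : L, ⁅m x, y⁆ = ⁅x, m y⁆)
    (hm2 : ∀ x : L, m (m x) = 0) : m = 0 := by
  have hcent := central_eq_zero_of_no_abelian_ideals habel
  -- L1 : m ⁅m w, u⁆ = 0
  have L1 : ∀ w u : L, m ⁅m w, u⁆ = 0 := by
    intro w u
    apply hcent
    intro v
    have Iplus : ⁅m ⁅m w, u⁆, v⁆ = ⁅u, m ⁅m w, v⁆⁆ := by
      calc ⁅m ⁅m w, u⁆, v⁆ = ⁅⁅m w, u⁆, m v⁆ := hm _ _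
        _ = ⁅m w, ⁅u, m v⁆⁆ - ⁅u, ⁅m w, m v⁆⁆ := lie_lie _ _ _
        _ = ⁅m w, ⁅m u, v⁆⁆ - ⁅u, ⁅m (m w), v⁆⁆ := by rw [← hm u v, ← hm (m w) v]
        _ = ⁅m w, ⁅m u, v⁆⁆ := by rw [hm2 w, zero_lie, lie_zero, sub_zero]
        _ = ⁅⁅m w, m u⁆, v⁆ + ⁅m u, ⁅m w, v⁆⁆ := leibniz_lie _ _ _
        _ = ⁅⁅m (m w), u⁆, v⁆ + ⁅u, m ⁅m w, v⁆⁆ := by rw [← hm (m w) u, hm u ⁅m w, v⁆]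
        _ = ⁅u, m ⁅m w, v⁆⁆ := by rw [hm2 w, zero_lie, zero_lie, zero_add]
    have Iminus : ⁅m ⁅m w, u⁆, v⁆ = -⁅u, m ⁅m w, v⁆⁆ := by
      calc ⁅m ⁅m w, u⁆, v⁆ = ⁅m ⁅w, m u⁆, v⁆ := by rw [hm w u]
        _ = ⁅⁅w, m u⁆, m v⁆ := hm _ _
        _ = ⁅w, ⁅m u, m v⁆⁆ - ⁅m u, ⁅w, m v⁆⁆ := lie_lie _ _ _
        _ = ⁅w, ⁅u, m (m v)⁆⁆ - ⁅u, m ⁅w, m v⁆⁆ := by rw [hm u (m v), hm u ⁅w, m v⁆]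
        _ = -⁅u, m ⁅w, m v⁆⁆ := by rw [hm2 v, lie_zero, lie_zero, zero_sub]
        _ = -⁅u, m ⁅m w, v⁆⁆ := by rw [hm w v]
    have h2 : ⁅m ⁅m w, u⁆, v⁆ = 0 := by
      have := Iplus.symm.trans Iminus
      -- X = -X gives X = 0
      have hx : ⁅u, m ⁅m w, v⁆⁆ = 0 := by
        have h2x : (2 : ℂ) • ⁅u, m ⁅m w, v⁆⁆ = 0 := by
          rw [two_smul]
          nth_rewrite 1 [this]
          rw [neg_add_cancel]
        have := smul_eq_zero.mp h2x
        simpa using this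
      rw [Iplus, hx]
    exact h2
  -- L3 : ⁅m u, ⁅w, m v⁆⁆ = 0
  have L3 : ∀ u w v : L, ⁅m u, ⁅w, m v⁆⁆ = 0 := by
    intro u w v
    rw [hm u ⁅w, m v⁆, ← hm w v, L1 w v, lie_zero]
  -- L2 : ⁅m u, m v⁆ = 0
  have L2 : ∀ u v : L, ⁅m u, m v⁆ = 0 := by
    intro u v
    rw [hm u (m v), hm2 v, lie_zero]
  -- L5 : the quadruple bracket vanishes
  have RA : ∀ v u w x : L, ⁅⁅v, m u⁆, ⁅w, m x⁆⁆ = -⁅m u, ⁅v, ⁅w, m x⁆⁆⁆ := by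
    intro v u w x
    rw [lie_lie v (m u) ⁅w, m x⁆, L3 u w x, lie_zero, zero_sub]
  have RB : ∀ v u w x : L, ⁅m u, ⁅v, ⁅w, m x⁆⁆⁆ = ⁅m u, ⁅w, ⁅v, m x⁆⁆⁆ := by
    intro v u w x
    rw [leibniz_lie v w (m x), lie_add, L3 u ⁅v, w⁆ x, zero_add]
  have S1 : ∀ v u w x : L, ⁅⁅v, m u⁆, ⁅w, m x⁆⁆ = ⁅⁅w, m u⁆, ⁅v, m x⁆⁆ := by
    intro v u w x
    rw [RA v u w x, RB v u w x, ← RA w u v x]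
  have S3 : ∀ v u w x : L, ⁅⁅v, m u⁆, ⁅w, m x⁆⁆ = -⁅⁅u, m v⁆, ⁅w, m x⁆⁆ := by
    intro v u w x
    have : ⁅v, m u⁆ = -⁅u, m v⁆ := by rw [← hm v u]; exact (lie_skew (m v) u).symm
    rw [this, neg_lie]
  have L5 : ∀ v u w x : L, ⁅⁅v, m u⁆, ⁅w, m x⁆⁆ = 0 := by
    intro v u w x
    have chain : ⁅⁅v, m u⁆, ⁅w, m x⁆⁆ = -⁅⁅v, m u⁆, ⁅w, m x⁆⁆ := by
      calc ⁅⁅v, m u⁆, ⁅w, m x⁆⁆ = ⁅⁅w, m u⁆, ⁅v, m x⁆⁆ := S1 v u w x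
        _ = -⁅⁅u, m w⁆, ⁅v, m x⁆⁆ := S3 w u v x
        _ = -⁅⁅v, m w⁆, ⁅u, m x⁆⁆ := by rw [S1 u w v x]
        _ = -(-⁅⁅w, m v⁆, ⁅u, m x⁆⁆) := by rw [S3 v w u x]
        _ = ⁅⁅w, m v⁆, ⁅u, m x⁆⁆ := neg_neg _
        _ = ⁅⁅u, m v⁆, ⁅w, m x⁆⁆ := S1 w v u x
        _ = -⁅⁅v, m u⁆, ⁅w, m x⁆⁆ := S3 u v w x
    have h2x : (2 : ℂ) • ⁅⁅v, m u⁆, ⁅w, m x⁆⁆ = 0 := by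
      rw [two_smul]; nth_rewrite 1 [chain]; rw [neg_add_cancel]
    simpa using smul_eq_zero.mp h2x
  classical
  set S : Submodule ℂ L := Submodule.span ℂ {t : L | ∃ x y : L, ⁅x, m y⁆ = t} with hS
  have genS : ∀ x y : L, ⁅x, m y⁆ ∈ S := fun x y => Submodule.subset_span ⟨x, y, rfl⟩
  have TT : ∀ a b c : L, ⁅a, ⁅b, m c⁆⁆ = -⁅c, ⁅a, m b⁆⁆ + ⁅b, m ⁅a, c⁆⁆ := by
    intro a b c
    calc ⁅a, ⁅b, m c⁆⁆ = ⁅a, ⁅m b, c⁆⁆ := by rw [hm b c]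
      _ = ⁅⁅a, m b⁆, c⁆ + ⁅m b, ⁅a, c⁆⁆ := leibniz_lie _ _ _
      _ = -⁅c, ⁅a, m b⁆⁆ + ⁅b, m ⁅a, c⁆⁆ := by
          rw [hm b ⁅a, c⁆, ← lie_skew ⁅a, m b⁆ c]
  have key2y : ∀ x w v : L, ⁅x, ⁅w, m v⁆⁆ ∈ S := by
    intro x w v
    have e1 := TT x w v
    have e2 := TT v x w
    have e3 := TT w v x
    rw [e2] at e1
    rw [e3] at e1
    have h2 : (2 : ℂ) • ⁅x, ⁅w, m v⁆⁆ =
        ⁅w, m ⁅x, v⁆⁆ - ⁅x, m ⁅v, w⁆⁆ + ⁅v, m ⁅w, x⁆⁆ := by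
      rw [two_smul]
      nth_rewrite 1 [e1]
      abel
    have hT : ⁅x, ⁅w, m v⁆⁆ = (2⁻¹ : ℂ) • ((2 : ℂ) • ⁅x, ⁅w, m v⁆⁆) := by
      rw [smul_smul]; norm_num
    rw [hT, h2]
    exact S.smul_mem _ (S.add_mem (S.sub_mem (genS _ _) (genS _ _)) (genS _ _))
  -- the ideal
  set Usub : Submodule ℂ L := LinearMap.range m ⊔ S with hUsub
  have memrange : ∀ u : L, m u ∈ Usub := fun u =>
    Submodule.mem_sup_left (LinearMap.mem_range_self m u)
  let U : LieIdeal ℂ L :=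
    { toSubmodule := Usub
      lie_mem := by
        intro x y hy
        replace hy : y ∈ Usub := hy
        show ⁅x, y⁆ ∈ Usub
        obtain ⟨a, ha, s, hs, rfl⟩ := Submodule.mem_sup.mp hy
        rw [lie_add]
        apply Submodule.add_mem
        · obtain ⟨u, rfl⟩ := ha
          exact Submodule.mem_sup_right (genS x u)
        · refine Submodule.span_induction (p := fun t _ => ⁅x, t⁆ ∈ Usub) ?_ ?_ ?_ ?_ hs
          · rintro t ⟨w, v, rfl⟩
            exact Submodule.mem_sup_right (key2y x w v)
          · show ⁅x, (0:L)⁆ ∈ Usub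
            rw [lie_zero]; exact Submodule.zero_mem _
          · intro a b _ _ hxa hxb
            rw [lie_add]; exact Submodule.add_mem _ hxa hxb
          · intro c a _ hxa
            rw [lie_smul]; exact Submodule.smul_mem _ _ hxa }
  -- abelian
  have stepA : ∀ u : L, ∀ b ∈ Usub, ⁅m u, b⁆ = 0 := by
    intro u b hb
    obtain ⟨a, ha, s, hs, rfl⟩ := Submodule.mem_sup.mp hb
    rw [lie_add]
    obtain ⟨y, rfl⟩ := ha
    rw [L2 u y, zero_add]
    refine Submodule.span_induction (p := fun t _ => ⁅m u, t⁆ = 0) ?_ ?_ ?_ ?_ hs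
    · rintro t ⟨w, v, rfl⟩; exact L3 u w v
    · show ⁅m u, (0:L)⁆ = 0
      exact lie_zero _
    · intro a b _ _ h1 h2; rw [lie_add, h1, h2, add_zero]
    · intro c a _ h1; rw [lie_smul, h1, smul_zero]
  have stepB : ∀ w v : L, ∀ b ∈ Usub, ⁅⁅w, m v⁆, b⁆ = 0 := by
    intro w v b hb
    obtain ⟨a, ha, s, hs, rfl⟩ := Submodule.mem_sup.mp hb
    rw [lie_add]
    obtain ⟨y, rfl⟩ := ha
    have h1 : ⁅⁅w, m v⁆, m y⁆ = 0 := by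
      rw [← lie_skew ⁅w, m v⁆ (m y), L3 y w v, neg_zero]
    rw [h1, zero_add]
    refine Submodule.span_induction (p := fun t _ => ⁅⁅w, m v⁆, t⁆ = 0) ?_ ?_ ?_ ?_ hs
    · rintro t ⟨a', b', rfl⟩; exact L5 w v a' b'
    · show ⁅⁅w, m v⁆, (0:L)⁆ = 0
      exact lie_zero _
    · intro a b _ _ h1 h2; rw [lie_add, h1, h2, add_zero]
    · intro c a _ h1; rw [lie_smul, h1, smul_zero]
  have hUab : IsLieAbelian U := by
    constructor
    intro a b
    apply Subtype.ext
    have hcoe : (↑(⁅a, b⁆ : U) : L) = ⁅(a : L), (b : L)⁆ := rfl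
    rw [hcoe]
    show ⁅(a : L), (b : L)⁆ = (↑(0 : U) : L)
    have hb : (b : L) ∈ Usub := b.2
    have ha : (a : L) ∈ Usub := a.2
    obtain ⟨a', ha', s, hs, hsum⟩ := Submodule.mem_sup.mp ha
    have : ⁅(a : L), (b : L)⁆ = 0 := by
      rw [← hsum, add_lie]
      obtain ⟨y, rfl⟩ := ha'
      rw [stepA y _ hb, zero_add]
      refine Submodule.span_induction (p := fun t _ => ⁅t, (b : L)⁆ = 0) ?_ ?_ ?_ ?_ hs
      · rintro t ⟨w, v, rfl⟩; exact stepB w v _ hb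
      · show ⁅(0:L), (b : L)⁆ = 0
        exact zero_lie _
      · intro c d _ _ h1 h2; rw [add_lie, h1, h2, add_zero]
      · intro c d _ h1; rw [smul_lie, h1, smul_zero]
    rw [this]; rfl
  have hUbot : U = ⊥ := habel U hUab
  -- conclude
  ext u
  have : m u ∈ U := memrange u
  rw [hUbot] at this
  simpa using (LieSubmodule.mem_bot _).mp this

/-- A commuting nilpotent linear map on a Lie algebra with no abelian ideals is zero. -/
lemma comm_nilpotent_zero
    (habel : ∀ I : LieIdeal ℂ L, IsLieAbelian I → I = ⊥)
    (m : L →ₗ[ℂ] L) (hm : ∀ x y : L, ⁅m x, y⁆ = ⁅x, m y⁆)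
    (k : ℕ) (hk : m ^ k = 0) : m = 0 := by
  have hmp : ∀ (j : ℕ) (x y : L), ⁅(m ^ j) x, y⁆ = ⁅x, (m ^ j) y⁆ := by
    intro j
    induction j with
    | zero => intro x y; simp
    | succ j ih =>
      intro x y
      have h1 : (m ^ (j + 1)) x = (m ^ j) (m x) := by rw [pow_succ, Module.End.mul_apply]
      have h2 : (m ^ (j + 1)) y = m ((m ^ j) y) := by rw [pow_succ', Module.End.mul_apply]
      rw [h1, ih (m x) y, hm x ((m ^ j) y), ← h2]
  induction k with
  | zero =>
    have h1 : (1 : L →ₗ[ℂ] L) = 0 := by rw [← pow_zero m]; exact hk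
    ext u
    have hu : u = 0 := by simpa using LinearMap.ext_iff.mp h1 u
    rw [hu]; simp
  | succ k ih =>
    rcases Nat.eq_zero_or_pos k with hk0 | hk1
    · subst hk0; simpa using hk
    · have hsq : ∀ x : L, (m ^ k) ((m ^ k) x) = 0 := by
        intro x
        have : (m ^ k) ((m ^ k) x) = (m ^ (k + k)) x := by
          rw [pow_add, Module.End.mul_apply]
        rw [this]
        have hle : k + 1 ≤ k + k := by omega
        obtain ⟨r, hr⟩ := Nat.exists_eq_add_of_le hle
        rw [hr, pow_add, Module.End.mul_apply, hk]
        simp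
      have := comm_sq_zero habel (m ^ k) (hmp k) hsq
      exact ih this
end Abstract

/-- On a finite-dimensional complex semisimple Lie algebra, every
commuting linear map lies in the centroid. -/
theorem stmt_6 {g : Type*} [LieRing g] [LieAlgebra ℂ g] [Module.Finite ℂ g]
    [LieAlgebra.IsSemisimple ℂ g]
    (f : g →ₗ[ℂ] g) (hf : ∀ x y : g, ⁅f x, y⁆ = ⁅x, f y⁆) :
    ∀ x y : g, f ⁅x, y⁆ = ⁅f x, y⁆ := by
  classical
  have habel : ∀ I : LieIdeal ℂ g, IsLieAbelian I → I = ⊥ :=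
    (LieAlgebra.hasTrivialRadical_iff_no_abelian_ideals ℂ g).mp inferInstance
  -- commuting property for polynomials in `f`
  have hpoly : ∀ (p : Polynomial ℂ) (a b : g),
      ⁅Polynomial.aeval f p a, b⁆ = ⁅a, Polynomial.aeval f p b⁆ := by
    have hpow : ∀ (j : ℕ) (x y : g), ⁅(f ^ j) x, y⁆ = ⁅x, (f ^ j) y⁆ := by
      intro j
      induction j with
      | zero => intro x y; simp
      | succ j ih =>
        intro x y
        have h1 : (f ^ (j + 1)) x = (f ^ j) (f x) := by rw [pow_succ, Module.End.mul_apply]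
        have h2 : (f ^ (j + 1)) y = f ((f ^ j) y) := by rw [pow_succ', Module.End.mul_apply]
        rw [h1, ih (f x) y, hf x ((f ^ j) y), ← h2]
    intro p
    induction p using Polynomial.induction_on' with
    | add p q hp hq =>
      intro a b
      simp only [map_add, LinearMap.add_apply, add_lie, lie_add, hp, hq]
    | monomial n c =>
      intro a b
      rw [Polynomial.aeval_monomial, Module.algebraMap_end_eq_smul_id]
      simp only [Module.End.mul_apply, LinearMap.smul_apply, LinearMap.id_apply,
        smul_lie, lie_smul, hpow n]
  have haev : ∀ (c : ℂ) (i : ℕ),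
      Polynomial.aeval f ((Polynomial.X - Polynomial.C c) ^ i) = (f - c • 1) ^ i := by
    intro c i
    rw [map_pow, map_sub, Polynomial.aeval_X, Polynomial.aeval_C,
      Module.algebraMap_end_eq_smul_id]
    rfl
  have hpowc : ∀ (c : ℂ) (i : ℕ) (a b : g),
      ⁅((f - c • 1) ^ i) a, b⁆ = ⁅a, ((f - c • 1) ^ i) b⁆ := by
    intro c i a b
    rw [← haev c i]
    exact hpoly _ a b
  set W : ℂ → Submodule ℂ g := fun c => Module.End.maxGenEigenspace f c with hW
  have hWmem : ∀ (c : ℂ) (a : g), a ∈ W c ↔ ∃ k : ℕ, ((f - c • 1) ^ k) a = 0 := by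
    intro c a
    exact Module.End.mem_maxGenEigenspace f c a
  have hWtop : (⨆ c, W c) = ⊤ := Module.End.iSup_maxGenEigenspace_eq_top f
  -- brackets between different generalized eigenspaces vanish
  have hcross : ∀ {c d : ℂ}, c ≠ d → ∀ {a b : g}, a ∈ W c → b ∈ W d → ⁅a, b⁆ = 0 := by
    intro c d hcd a b ha hb
    obtain ⟨i, hi⟩ := (hWmem c a).mp ha
    obtain ⟨j, hj⟩ := (hWmem d b).mp hb
    have hcop : IsCoprime ((Polynomial.X - Polynomial.C c) ^ i)
        ((Polynomial.X - Polynomial.C d) ^ j) :=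
      (Polynomial.isCoprime_X_sub_C_of_isUnit_sub
        ((sub_ne_zero.mpr hcd).isUnit)).pow
    obtain ⟨A, B, hAB⟩ := hcop
    have hb' : Polynomial.aeval f (A * (Polynomial.X - Polynomial.C c) ^ i) b = b := by
      have h1 := congrArg (fun q => (Polynomial.aeval f q) b) hAB
      simp only [map_add, map_mul, map_one, LinearMap.add_apply, Module.End.mul_apply,
        Module.End.one_apply] at h1
      rw [haev d j, hj, map_zero, add_zero] at h1
      simpa [map_mul, Module.End.mul_apply] using h1
    have ha' : Polynomial.aeval f (A * (Polynomial.X - Polynomial.C c) ^ i) a = 0 := by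
      rw [map_mul, Module.End.mul_apply, haev c i, hi, map_zero]
    calc ⁅a, b⁆ = ⁅a, Polynomial.aeval f (A * (Polynomial.X - Polynomial.C c) ^ i) b⁆ := by
          rw [hb']
      _ = ⁅Polynomial.aeval f (A * (Polynomial.X - Polynomial.C c) ^ i) a, b⁆ :=
          (hpoly _ a b).symm
      _ = 0 := by rw [ha', zero_lie]
  
  have hcent := central_eq_zero_of_no_abelian_ideals habel
  -- brackets within one generalized eigenspace stay there
  have hsub : ∀ {c : ℂ} {a b : g}, a ∈ W c → b ∈ W c → ⁅a, b⁆ ∈ W c := by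
    intro c a b ha hb
    obtain ⟨i, hi⟩ := (hWmem c a).mp ha
    obtain ⟨j, hj⟩ := (hWmem c b).mp hb
    refine (hWmem c _).mpr ⟨i + j, ?_⟩
    have ha0 : ((f - c • 1) ^ (i + j)) a = 0 := by
      rw [add_comm i j, pow_add, Module.End.mul_apply, hi, map_zero]
    have hb0 : ((f - c • 1) ^ (i + j)) b = 0 := by
      rw [pow_add, Module.End.mul_apply, hj, map_zero]
    apply hcent
    intro v
    rw [hpowc c (i + j) ⁅a, b⁆ v, lie_lie, ← hpowc c (i + j) b v,
      ← hpowc c (i + j) a v, ha0, hb0]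
    simp
  -- f preserves each W c
  have hfW : ∀ {c : ℂ} {a : g}, a ∈ W c → f a ∈ W c := by
    intro c a ha
    obtain ⟨i, hi⟩ := (hWmem c a).mp ha
    refine (hWmem c _).mpr ⟨i, ?_⟩
    have h1 : (f - c • 1) * f = f * (f - c • 1) := by
      simp only [sub_mul, mul_sub, smul_mul_assoc, mul_smul_comm, one_mul, mul_one]
    have h1' : Commute (f - c • 1) f := h1
    have hcomm : (f - c • 1) ^ i * f = f * (f - c • 1) ^ i := (h1'.pow_left i).eq
    have : ((f - c • 1) ^ i) (f a) = f (((f - c • 1) ^ i) a) := by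
      rw [← Module.End.mul_apply, hcomm, Module.End.mul_apply]
    rw [this, hi, map_zero]
  -- each W c is a Lie ideal
  have hlie : ∀ (c : ℂ) (x : g) {b : g}, b ∈ W c → ⁅x, b⁆ ∈ W c := by
    intro c x b hb
    have hx : x ∈ ⨆ d, W d := by rw [hWtop]; exact Submodule.mem_top
    refine Submodule.iSup_induction W (motive := fun t => ⁅t, b⁆ ∈ W c) hx ?_ ?_ ?_
    · intro d yy hy
      rcases eq_or_ne d c with rfl | hne
      · exact hsub hy hb
      · rw [hcross hne hy hb]; exact Submodule.zero_mem _
    · show ⁅(0 : g), b⁆ ∈ W c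
      rw [zero_lie]; exact Submodule.zero_mem _
    · intro u v hu hv
      show ⁅u + v, b⁆ ∈ W c
      rw [add_lie]; exact Submodule.add_mem _ hu hv
  let J : ℂ → LieIdeal ℂ g := fun c =>
    { toSubmodule := W c
      lie_mem := fun {x b} hb => hlie c x hb }
  have hres : ∀ (c : ℂ) (a : g), a ∈ W c → (f - c • 1) a ∈ W c := by
    intro c a ha
    have h1 : (f - c • (1 : g →ₗ[ℂ] g)) a = f a - c • a := by simp
    rw [h1]
    exact Submodule.sub_mem _ (hfW ha) (Submodule.smul_mem _ _ ha)
  -- on each W c, f acts as c • id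
  have main : ∀ (c : ℂ), ∀ a ∈ W c, f a = c • a := by
    intro c
    let mc : ↥(J c) →ₗ[ℂ] ↥(J c) :=
      { toFun := fun a => ⟨(f - c • 1) a.1, hres c a.1 a.2⟩
        map_add' := fun a b => Subtype.ext (map_add (f - c • 1) a.1 b.1)
        map_smul' := fun t a => Subtype.ext (map_smul (f - c • 1) t a.1) }
    have hmcapp : ∀ a : ↥(J c), (mc a : g) = (f - c • 1) a.1 := fun a => rfl
    -- no abelian ideals in ↥(J c)
    have habelK : ∀ I : LieIdeal ℂ ↥(J c), IsLieAbelian I → I = ⊥ := by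
      intro I hI
      let ι : ↥(J c) →ₗ[ℂ] g := (J c).incl.toLinearMap
      have hι : ∀ v : ↥(J c), ι v = (v : g) := fun v => rfl
      set KIsub : Submodule ℂ g := Submodule.map ι (LieSubmodule.toSubmodule I) with hKIsub
      have hKIW : ∀ u ∈ KIsub, u ∈ W c := by
        rintro u ⟨v, hv, rfl⟩
        exact v.2
      have hKIlie : ∀ (x : g) {u : g}, u ∈ KIsub → ⁅x, u⁆ ∈ KIsub := by
        intro x u hu
        obtain ⟨v, hv, rfl⟩ := hu
        have hx : x ∈ ⨆ d, W d := by rw [hWtop]; exact Submodule.mem_top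
        refine Submodule.iSup_induction W (motive := fun t => ⁅t, ι v⁆ ∈ KIsub) hx ?_ ?_ ?_
        · intro d yy hy
          rcases eq_or_ne d c with rfl | hne
          · refine ⟨⁅(⟨yy, hy⟩ : ↥(J d)), v⁆, ?_, rfl⟩
            exact I.lie_mem hv
          · rw [hcross hne hy (hKIW _ ⟨v, hv, rfl⟩)]
            exact Submodule.zero_mem _
        · show ⁅(0 : g), ι v⁆ ∈ KIsub
          rw [zero_lie]; exact Submodule.zero_mem _
        · intro u' v' hu' hv'
          show ⁅u' + v', ι v⁆ ∈ KIsub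
          rw [add_lie]; exact Submodule.add_mem _ hu' hv'
      let KI : LieIdeal ℂ g :=
        { toSubmodule := KIsub
          lie_mem := fun {x u} hu => hKIlie x hu }
      have hKIab : IsLieAbelian ↥KI := by
        constructor
        intro a b
        apply Subtype.ext
        have hcoe : (↑(⁅a, b⁆ : ↥KI) : g) = ⁅(a : g), (b : g)⁆ := rfl
        rw [hcoe]
        obtain ⟨va, hva, ha⟩ := a.2
        obtain ⟨vb, hvb, hb⟩ := b.2
        rw [← ha, ← hb]
        have h1 : ⁅va, vb⁆ = (0 : ↥(J c)) := by
          have h0 : (⁅(⟨va, hva⟩ : ↥I), (⟨vb, hvb⟩ : ↥I)⁆ : ↥I) = 0 :=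
            trivial_lie_zero _ _ _ _
          exact congrArg Subtype.val h0
        have h2 : ⁅ι va, ι vb⁆ = ι ⁅va, vb⁆ := rfl
        rw [h2, h1, map_zero]
        rfl
      have hbot := habel KI hKIab
      rw [LieSubmodule.eq_bot_iff]
      intro v hv
      have h3 : ι v ∈ KI := ⟨v, hv, rfl⟩
      rw [hbot] at h3
      have h4 : ι v = 0 := (LieSubmodule.mem_bot _).mp h3
      apply Subtype.ext
      rw [← hι v, h4]
      rfl
    -- mc is commuting
    have hmc : ∀ a b : ↥(J c), ⁅mc a, b⁆ = ⁅a, mc b⁆ := by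
      intro a b
      apply Subtype.ext
      have h1 : (↑(⁅mc a, b⁆ : ↥(J c)) : g) = ⁅(f - c • 1) a.1, b.1⁆ := rfl
      have h2 : (↑(⁅a, mc b⁆ : ↥(J c)) : g) = ⁅a.1, (f - c • 1) b.1⁆ := rfl
      rw [h1, h2]
      simp only [LinearMap.sub_apply, LinearMap.smul_apply, Module.End.one_apply,
        sub_lie, lie_sub, smul_lie, lie_smul, hf a.1 b.1]
    -- mc is nilpotent
    have hcoepow : ∀ (k : ℕ) (a : ↥(J c)), ((mc ^ k) a : g) = ((f - c • 1) ^ k) a.1 := by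
      intro k
      induction k with
      | zero => intro a; simp
      | succ k ih =>
        intro a
        have h1 : (mc ^ (k + 1)) a = (mc ^ k) (mc a) := by
          rw [pow_succ, Module.End.mul_apply]
        have h2 : ((f - c • 1) ^ (k + 1)) a.1 = ((f - c • 1) ^ k) ((f - c • 1) a.1) := by
          rw [pow_succ, Module.End.mul_apply]
        rw [h1, ih (mc a), hmcapp, h2]
    have hnilp : mc ^ (Module.finrank ℂ g) = 0 := by
      apply LinearMap.ext
      intro a
      apply Subtype.ext
      rw [hcoepow]
      obtain ⟨i, hi⟩ := (hWmem c a.1).mp a.2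
      have h2 := Module.End.ker_pow_le_ker_pow_finrank (f - c • 1) i
        (by simpa using hi)
      simpa using h2
    have hzero := comm_nilpotent_zero habelK mc hmc _ hnilp
    intro a ha
    have h1 : mc ⟨a, ha⟩ = 0 := by rw [hzero]; rfl
    have h2 : (f - c • (1 : g →ₗ[ℂ] g)) a = 0 := congrArg Subtype.val h1
    have h3 : f a - c • a = 0 := by simpa using h2
    exact sub_eq_zero.mp h3
  -- final assembly
  have key : ∀ (c d : ℂ) (a b : g), a ∈ W c → b ∈ W d → f ⁅a, b⁆ = ⁅f a, b⁆ := by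
    intro c d a b ha hb
    rcases eq_or_ne c d with rfl | hne
    · have h1 : ⁅a, b⁆ ∈ W c := hsub ha hb
      rw [main c _ h1, main c _ ha, smul_lie]
    · rw [hcross hne ha hb, map_zero, hcross hne (hfW ha) hb]
  intro x y
  have hy : y ∈ ⨆ d, W d := by rw [hWtop]; exact Submodule.mem_top
  refine Submodule.iSup_induction W (motive := fun t => f ⁅x, t⁆ = ⁅f x, t⁆) hy ?_ ?_ ?_
  · intro d b hb
    have hx : x ∈ ⨆ cc, W cc := by rw [hWtop]; exact Submodule.mem_top
    refine Submodule.iSup_induction W (motive := fun t => f ⁅t, b⁆ = ⁅f t, b⁆) hx ?_ ?_ ?_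
    · intro c a ha; exact key c d a b ha hb
    · show f ⁅(0 : g), b⁆ = ⁅f 0, b⁆
      simp
    · intro u v hu hv
      show f ⁅u + v, b⁆ = ⁅f (u + v), b⁆
      replace hu : f ⁅u, b⁆ = ⁅f u, b⁆ := hu
      replace hv : f ⁅v, b⁆ = ⁅f v, b⁆ := hv
      rw [add_lie, map_add, hu, hv, map_add, add_lie]
  · show f ⁅x, (0 : g)⁆ = ⁅f x, 0⁆
    simp
  · intro u v hu hv
    show f ⁅x, u + v⁆ = ⁅f x, u + v⁆
    replace hu : f ⁅x, u⁆ = ⁅f x, u⁆ := hu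
    replace hv : f ⁅x, v⁆ = ⁅f x, v⁆ := hv
    rw [lie_add, map_add, hu, hv, lie_add]
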